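/- Let $I \subseteq \{1,\dots,N\}$ with $|I| = k$, and let $K, K' \subseteq \{1,\dots,k\}$ with $|K| = |K'| = l$. Then for any $N \times N$ complex matrix $X$ and any $J \subseteq \{1,\dots,N\}$ with $|J| = k$: $\delta_{K,K'} \det X[I,J] = \sum_{P \in \binom{[k]}{l}} (-1)^{\mathrm{wt}(P) - \mathrm{wt}(K)} \det X[I_K, J_P] \cdot \det X[I^{K'}, J^P]$, where $I_K = \{i_p : p \in K\}$, $I^K = I \setminus I_K$, and similarly for $J$. -/

import Mathlib

open Matrix

/-- Minor of `X` with rows `A` and columns `B` (increasing order); junk `0` if cards differ. -/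
noncomputable def minorC {N : ℕ} (X : Matrix (Fin N) (Fin N) ℂ) (A B : Finset (Fin N)) : ℂ :=
  if h : B.card = A.card then
    Matrix.det (Matrix.of fun (a b : Fin A.card) =>
      X (A.orderEmbOfFin rfl a) (B.orderEmbOfFin h b))
  else 0

/-- `I_K`: the subset of `I` whose positions (in increasing order) lie in `K`. -/
def subIdx {N k : ℕ} (I : Finset (Fin N)) (hI : I.card = k) (K : Finset (Fin k)) :
    Finset (Fin N) :=
  K.image (fun p => I.orderEmbOfFin hI p)

/-- 1-indexed weight of a subset of positions. -/
def wtF {k : ℕ} (K : Finset (Fin k)) : ℕ := ∑ p ∈ K, ((p : ℕ) + 1)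

open Finset Equiv

namespace GenLaplace

variable {n : ℕ}

/-- 0-indexed weight. -/
def wt0 (A : Finset (Fin n)) : ℕ := ∑ a ∈ A, (a : ℕ)

lemma sumElim_inj (A : Finset (Fin n)) :
    Function.Injective (Sum.elim (A.orderEmbOfFin rfl) (Aᶜ.orderEmbOfFin rfl)) := by
  intro x y h
  rcases x with i | i <;> rcases y with j | j <;> simp only [Sum.elim_inl, Sum.elim_inr] at h
  · simpa using (A.orderEmbOfFin rfl).injective h
  · exfalso
    have h1 : A.orderEmbOfFin rfl i ∈ A := Finset.orderEmbOfFin_mem _ _ _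
    have h2 : Aᶜ.orderEmbOfFin rfl j ∈ Aᶜ := Finset.orderEmbOfFin_mem _ _ _
    rw [h] at h1; exact (Finset.mem_compl.mp h2) h1
  · exfalso
    have h1 : A.orderEmbOfFin rfl j ∈ A := Finset.orderEmbOfFin_mem _ _ _
    have h2 : Aᶜ.orderEmbOfFin rfl i ∈ Aᶜ := Finset.orderEmbOfFin_mem _ _ _
    rw [h] at h2; exact (Finset.mem_compl.mp h2) h1
  · simpa using (Aᶜ.orderEmbOfFin rfl).injective h

lemma card_sum (A : Finset (Fin n)) : A.card + Aᶜ.card = n := by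
  rw [Finset.card_add_card_compl]; simp

/-- Equiv from the sum of index types onto `Fin n`, via the two order embeddings. -/
noncomputable def sumEquiv (A : Finset (Fin n)) : Fin A.card ⊕ Fin Aᶜ.card ≃ Fin n :=
  Equiv.ofBijective _ ((Fintype.bijective_iff_injective_and_card _).2
    ⟨sumElim_inj A, by simp [card_sum A]⟩)

@[simp] lemma sumEquiv_inl (A : Finset (Fin n)) (i : Fin A.card) :
    sumEquiv A (Sum.inl i) = A.orderEmbOfFin rfl i := rfl

@[simp] lemma sumEquiv_inr (A : Finset (Fin n)) (j : Fin Aᶜ.card) :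
    sumEquiv A (Sum.inr j) = Aᶜ.orderEmbOfFin rfl j := rfl

/-- The canonical equiv: initial segment / tail. -/
def canEquiv (A : Finset (Fin n)) : Fin A.card ⊕ Fin Aᶜ.card ≃ Fin n :=
  finSumFinEquiv.trans (finCongr (card_sum A))

@[simp] lemma canEquiv_inl (A : Finset (Fin n)) (i : Fin A.card) :
    (canEquiv A (Sum.inl i) : ℕ) = (i : ℕ) := by simp [canEquiv]

@[simp] lemma canEquiv_inr (A : Finset (Fin n)) (j : Fin Aᶜ.card) :
    (canEquiv A (Sum.inr j) : ℕ) = A.card + (j : ℕ) := by simp [canEquiv]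

/-- The shuffle permutation of `A`. -/
noncomputable def permOf (A : Finset (Fin n)) : Equiv.Perm (Fin n) :=
  (canEquiv A).symm.trans (sumEquiv A)

@[simp] lemma permOf_can (A : Finset (Fin n)) (x) :
    permOf A (canEquiv A x) = sumEquiv A x := by simp [permOf]


lemma le_emb (s : Finset (Fin n)) (i : Fin s.card) : (i : ℕ) ≤ (s.orderEmbOfFin rfl i : ℕ) := by
  have key : ∀ m : ℕ, ∀ i : Fin s.card, (i : ℕ) = m → m ≤ (s.orderEmbOfFin rfl i : ℕ) := by
    intro m
    induction m with
    | zero => intro i _; exact Nat.zero_le _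
    | succ m ih =>
      intro i hi
      have hm : m < s.card := by omega
      have h1 := ih ⟨m, hm⟩ rfl
      have h2 : s.orderEmbOfFin rfl ⟨m, hm⟩ < s.orderEmbOfFin rfl i :=
        (s.orderEmbOfFin rfl).strictMono (by rw [Fin.lt_def]; simp only [Fin.val_mk]; omega)
      rw [Fin.lt_def] at h2; omega
  exact key _ i rfl

/-- Sorted parametrization of a set obtained by swapping an element `c` with an
adjacent value `d` not in the set. -/
lemma emb_replace (s : Finset (Fin n)) {c d : Fin n} (hc : c ∈ s) (hd : d ∉ s)
    (hcd : (c : ℕ) = (d : ℕ) + 1 ∨ (d : ℕ) = (c : ℕ) + 1)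
    (h' : (insert d (s.erase c)).card = s.card) (i : Fin (insert d (s.erase c)).card) :
    (insert d (s.erase c)).orderEmbOfFin rfl i
      = if s.orderEmbOfFin rfl (Fin.cast h' i) = c then d
        else s.orderEmbOfFin rfl (Fin.cast h' i) := by
  have hmem : ∀ j : Fin (insert d (s.erase c)).card,
      (if s.orderEmbOfFin rfl (Fin.cast h' j) = c then d
        else s.orderEmbOfFin rfl (Fin.cast h' j)) ∈ insert d (s.erase c) := by
    intro j
    by_cases h : s.orderEmbOfFin rfl (Fin.cast h' j) = c
    · simp [h]
    · simp only [h, if_false, Finset.mem_insert, Finset.mem_erase]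
      exact Or.inr ⟨h, s.orderEmbOfFin_mem rfl _⟩
  have hmono : StrictMono (fun j : Fin (insert d (s.erase c)).card =>
      (if s.orderEmbOfFin rfl (Fin.cast h' j) = c then d
        else s.orderEmbOfFin rfl (Fin.cast h' j))) := by
    intro i j hij
    have hlt : s.orderEmbOfFin rfl (Fin.cast h' i) < s.orderEmbOfFin rfl (Fin.cast h' j) :=
      (s.orderEmbOfFin rfl).strictMono (by exact hij)
    have hdi : s.orderEmbOfFin rfl (Fin.cast h' i) ≠ d := fun h => hd (h ▸ s.orderEmbOfFin_mem rfl _)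
    have hdj : s.orderEmbOfFin rfl (Fin.cast h' j) ≠ d := fun h => hd (h ▸ s.orderEmbOfFin_mem rfl _)
    by_cases h1 : s.orderEmbOfFin rfl (Fin.cast h' i) = c <;>
      by_cases h2 : s.orderEmbOfFin rfl (Fin.cast h' j) = c <;>
        simp only [h1, h2, if_true, if_false]
    · exact absurd (h1.trans h2.symm) (ne_of_lt hlt)
    · rw [Fin.lt_def] at *
      rw [h1] at hlt
      rw [Fin.ne_iff_vne] at hdj
      omega
    · rw [Fin.lt_def] at *
      rw [h2] at hlt
      rw [Fin.ne_iff_vne] at hdi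
      omega
    · exact hlt
  exact congrFun (Finset.orderEmbOfFin_unique rfl hmem hmono).symm i

lemma permOf_apply_lt (A : Finset (Fin n)) (x : Fin n) (h : (x : ℕ) < A.card) :
    permOf A x = A.orderEmbOfFin rfl ⟨x, h⟩ := by
  have : x = canEquiv A (Sum.inl ⟨x, h⟩) := by
    apply Fin.ext; simp
  conv_lhs => rw [this]
  rw [permOf_can, sumEquiv_inl]

lemma permOf_apply_ge (A : Finset (Fin n)) (x : Fin n) (h : A.card ≤ (x : ℕ)) :
    permOf A x = Aᶜ.orderEmbOfFin rfl ⟨x - A.card, by have := card_sum A; omega⟩ := by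
  have : x = canEquiv A (Sum.inr ⟨x - A.card, by have := card_sum A; omega⟩) := by
    apply Fin.ext; simp; omega
  conv_lhs => rw [this]
  rw [permOf_can, sumEquiv_inr]


lemma mem_emb (s : Finset (Fin n)) {k : ℕ} (h : s.card = k) (x : Fin n) :
    x ∈ s ↔ ∃ i, s.orderEmbOfFin h i = x := by
  rw [← Finset.mem_coe, ← Finset.range_orderEmbOfFin s h]
  exact Iff.rfl

lemma emb_congr {s t : Finset (Fin n)} (h : s = t) (i : Fin s.card) :
    s.orderEmbOfFin rfl i = t.orderEmbOfFin rfl (Fin.cast (by rw [h]) i) := by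
  subst h; rfl

lemma initseg (A : Finset (Fin n))
    (hng : ∀ a ∈ A, 0 < (a : ℕ) → ∃ b ∈ A, (b : ℕ) + 1 = (a : ℕ)) :
    ∀ i : Fin A.card, (A.orderEmbOfFin rfl i : ℕ) = (i : ℕ) := by
  have key : ∀ m : ℕ, ∀ i : Fin A.card, (i : ℕ) = m → (A.orderEmbOfFin rfl i : ℕ) = m := by
    intro m
    induction m using Nat.strong_induction_on with
    | _ m IH =>
    intro i hi
    rcases Nat.lt_or_ge m (A.orderEmbOfFin rfl i : ℕ) with hlt | hge
    · exfalso
      have hmem := A.orderEmbOfFin_mem rfl i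
      obtain ⟨c, hc, hc1⟩ := hng _ hmem (by omega)
      obtain ⟨j, hj⟩ := (mem_emb A rfl c).mp hc
      have hcl : A.orderEmbOfFin rfl j < A.orderEmbOfFin rfl i := by
        rw [hj, Fin.lt_def]; omega
      have hjm : (j : ℕ) < m := by
        have h2 : j < i := (A.orderEmbOfFin rfl).strictMono.lt_iff_lt.mp hcl
        rw [Fin.lt_def] at h2; omega
      have := IH _ hjm j rfl
      rw [hj] at this
      omega
    · have := le_emb A i
      omega
  exact fun i => key _ i rfl

lemma compl_initseg (A : Finset (Fin n))
    (hinit : ∀ i : Fin A.card, (A.orderEmbOfFin rfl i : ℕ) = (i : ℕ)) :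
    ∀ j : Fin Aᶜ.card, (Aᶜ.orderEmbOfFin rfl j : ℕ) = A.card + (j : ℕ) := by
  have hcs := card_sum A
  have hmem : ∀ j : Fin Aᶜ.card, (⟨A.card + (j : ℕ), by omega⟩ : Fin n) ∈ Aᶜ := by
    intro j
    rw [Finset.mem_compl]
    intro hmem
    obtain ⟨i, hi⟩ := (mem_emb A rfl _).mp hmem
    have := hinit i
    rw [hi] at this
    simp only [Fin.val_mk] at this
    omega
  have hmono : StrictMono (fun j : Fin Aᶜ.card => (⟨A.card + (j : ℕ), by omega⟩ : Fin n)) := by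
    intro i j hij
    rw [Fin.lt_def] at *
    simp only [Fin.val_mk]
    omega
  have := Finset.orderEmbOfFin_unique rfl hmem hmono
  intro j
  rw [← congrFun this j]

lemma permOf_initseg (A : Finset (Fin n))
    (hinit : ∀ i : Fin A.card, (A.orderEmbOfFin rfl i : ℕ) = (i : ℕ)) :
    permOf A = 1 := by
  have hcs := card_sum A
  ext x
  rcases Nat.lt_or_ge (x : ℕ) A.card with h | h
  · rw [permOf_apply_lt A x h]
    have := hinit ⟨x, h⟩
    simp only [Perm.one_apply, Fin.val_mk] at *
    omega
  · rw [permOf_apply_ge A x h]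
    have := compl_initseg A hinit ⟨(x : ℕ) - A.card, by omega⟩
    simp only [Perm.one_apply, Fin.val_mk] at *
    omega

lemma wt0_initseg (A : Finset (Fin n))
    (hinit : ∀ i : Fin A.card, (A.orderEmbOfFin rfl i : ℕ) = (i : ℕ)) :
    wt0 A = ∑ i ∈ Finset.range A.card, i := by
  have himg : A = Finset.image (A.orderEmbOfFin rfl) Finset.univ := by
    ext x
    simp only [Finset.mem_image, Finset.mem_univ, true_and]
    rw [mem_emb A rfl]
  rw [wt0]
  conv_lhs => rw [himg]
  rw [Finset.sum_image (by intro a _ b _ h; exact (A.orderEmbOfFin rfl).injective h)]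
  rw [← Fin.sum_univ_eq_sum_range]
  exact Finset.sum_congr rfl fun i _ => hinit i

lemma step_card {A : Finset (Fin n)} {a b : Fin n} (ha : a ∈ A) (hb : b ∉ A) :
    (insert b (A.erase a)).card = A.card := by
  rw [Finset.card_insert_of_notMem (fun h => hb (Finset.mem_of_mem_erase h)),
    Finset.card_erase_of_mem ha]
  have : 0 < A.card := Finset.card_pos.mpr ⟨a, ha⟩
  omega

lemma step_wt {A : Finset (Fin n)} {a b : Fin n} (ha : a ∈ A) (hb : b ∉ A)
    (hab : (b : ℕ) + 1 = (a : ℕ)) : wt0 (insert b (A.erase a)) + 1 = wt0 A := by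
  rw [wt0, wt0, Finset.sum_insert (fun h => hb (Finset.mem_of_mem_erase h)),
    ← Finset.sum_erase_add A _ ha]
  omega

lemma step_compl {A : Finset (Fin n)} {a b : Fin n} (ha : a ∈ A) (hb : b ∉ A) :
    (insert b (A.erase a))ᶜ = insert a (Aᶜ.erase b) := by
  ext x
  simp only [Finset.mem_compl, Finset.mem_insert, Finset.mem_erase]
  push_neg
  by_cases hxa : x = a <;> by_cases hxb : x = b <;> simp_all <;> tauto

lemma step_perm {A : Finset (Fin n)} {a b : Fin n} (ha : a ∈ A) (hb : b ∉ A)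
    (hab : (b : ℕ) + 1 = (a : ℕ)) :
    ∀ x, permOf A x = Equiv.swap b a (permOf (insert b (A.erase a)) x) := by
  have hcard := step_card ha hb
  have hcs := card_sum A
  have hadj : (a : ℕ) = (b : ℕ) + 1 ∨ (b : ℕ) = (a : ℕ) + 1 := Or.inl hab.symm
  have hcA : b ∈ Aᶜ := Finset.mem_compl.mpr hb
  have hdA : a ∉ Aᶜ := by simp [ha]
  have hcardc := step_card (A := Aᶜ) hcA hdA
  intro x
  rcases Nat.lt_or_ge (x : ℕ) A.card with h | h
  · rw [permOf_apply_lt A x h, permOf_apply_lt _ x (by rw [hcard]; exact h),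
      emb_replace A ha hb hadj hcard]
    have hx : Fin.cast hcard (⟨(x : ℕ), by rw [hcard]; exact h⟩ :
        Fin (insert b (A.erase a)).card) = ⟨(x : ℕ), h⟩ := rfl
    rw [hx]
    by_cases hcase : A.orderEmbOfFin rfl ⟨(x : ℕ), h⟩ = a
    · rw [if_pos hcase, Equiv.swap_apply_left, hcase]
    · rw [if_neg hcase, Equiv.swap_apply_of_ne_of_ne
        (fun hh => hb (by rw [← hh]; exact A.orderEmbOfFin_mem rfl _)) hcase]
  · rw [permOf_apply_ge A x h, permOf_apply_ge _ x (by rw [hcard]; exact h),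
      emb_congr (step_compl ha hb), emb_replace Aᶜ hcA hdA (Or.symm hadj) hcardc]
    have hv : Fin.cast hcardc (Fin.cast (by rw [step_compl ha hb])
        (⟨(x : ℕ) - (insert b (A.erase a)).card,
          by have h1 := card_sum (insert b (A.erase a)); have h2 := x.isLt; omega⟩ :
          Fin (insert b (A.erase a))ᶜ.card))
        = (⟨(x : ℕ) - A.card, by have := card_sum A; omega⟩ : Fin Aᶜ.card) := by
      apply Fin.ext
      simp [hcard]
    rw [hv]
    by_cases hcase : Aᶜ.orderEmbOfFin rfl ⟨(x : ℕ) - A.card, by omega⟩ = b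
    · rw [if_pos hcase, Equiv.swap_apply_right, hcase]
    · rw [if_neg hcase, Equiv.swap_apply_of_ne_of_ne hcase
        (fun hh => hdA (by rw [← hh]; exact Aᶜ.orderEmbOfFin_mem rfl _))]

theorem sign_permOf (A : Finset (Fin n)) :
    Equiv.Perm.sign (permOf A) = (-1) ^ (wt0 A + ∑ i ∈ Finset.range A.card, i) := by
  generalize hw : wt0 A = w
  induction w using Nat.strong_induction_on generalizing A with
  | _ w IH =>
  by_cases hgap : ∀ a ∈ A, 0 < (a : ℕ) → ∃ b ∈ A, (b : ℕ) + 1 = (a : ℕ)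
  · have hinit := initseg A hgap
    rw [permOf_initseg A hinit, Equiv.Perm.sign_one, ← hw, wt0_initseg A hinit, ← two_mul, pow_mul,
      Int.units_sq, one_pow]
  · push_neg at hgap
    obtain ⟨a, ha, ha0, hng⟩ := hgap
    have hwa : (a : ℕ) ≤ wt0 A := Finset.single_le_sum (fun i _ => Nat.zero_le _) ha
    set b : Fin n := ⟨(a : ℕ) - 1, by omega⟩ with hbdef
    have hab : (b : ℕ) + 1 = (a : ℕ) := by simp [hbdef]; omega
    have hb : b ∉ A := fun hmem => hng b hmem hab
    have hswap := step_perm ha hb hab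
    have hperm : permOf A = Equiv.swap b a * permOf (insert b (A.erase a)) := by
      refine Equiv.ext fun x => ?_
      rw [Equiv.Perm.mul_apply]; exact hswap x
    have hcard := step_card ha hb
    have hwt := step_wt ha hb hab
    have hba : b ≠ a := by rw [Fin.ne_iff_vne]; omega
    have hw' : wt0 (insert b (A.erase a)) = w - 1 := by omega
    have hIH := IH (w - 1) (by omega) _ hw'
    rw [hperm, Equiv.Perm.sign_mul, Equiv.Perm.sign_swap hba, hIH, hcard]
    have he : w + ∑ i ∈ Finset.range A.card, i
        = (w - 1 + ∑ i ∈ Finset.range A.card, i) + 1 := by omega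
    rw [he, pow_succ]
    exact mul_comm _ _

lemma sumEquiv_symm_inl (A : Finset (Fin n)) {x : Fin n} (hx : x ∈ A) :
    ∃ i, (sumEquiv A).symm x = Sum.inl i := by
  obtain ⟨i, hi⟩ := (mem_emb A rfl x).mp hx
  exact ⟨i, by rw [← hi, ← sumEquiv_inl, Equiv.symm_apply_apply]⟩

lemma sumEquiv_symm_inr (A : Finset (Fin n)) {x : Fin n} (hx : x ∉ A) :
    ∃ j, (sumEquiv A).symm x = Sum.inr j := by
  obtain ⟨j, hj⟩ := (mem_emb Aᶜ rfl x).mp (Finset.mem_compl.mpr hx)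
  exact ⟨j, by rw [← hj, ← sumEquiv_inr, Equiv.symm_apply_apply]⟩

@[simp] lemma sumEquiv_symm_emb (A : Finset (Fin n)) (i : Fin A.card) :
    (sumEquiv A).symm (A.orderEmbOfFin rfl i) = Sum.inl i := by
  rw [← sumEquiv_inl, Equiv.symm_apply_apply]

@[simp] lemma sumEquiv_symm_embc (A : Finset (Fin n)) (j : Fin Aᶜ.card) :
    (sumEquiv A).symm (Aᶜ.orderEmbOfFin rfl j) = Sum.inr j := by
  rw [← sumEquiv_inr, Equiv.symm_apply_apply]

lemma can_rel {K P : Finset (Fin n)} (hPK : P.card = K.card) (hc : Pᶜ.card = Kᶜ.card)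
    (y : Fin P.card ⊕ Fin Pᶜ.card) :
    canEquiv P y = canEquiv K ((Equiv.sumCongr (finCongr hPK) (finCongr hc)) y) := by
  cases y with
  | inl i => apply Fin.ext; simp
  | inr j => apply Fin.ext; simp [hPK]

lemma emb_cast (s : Finset (Fin n)) {k : ℕ} (h : s.card = k) (a : Fin k) :
    s.orderEmbOfFin h a = s.orderEmbOfFin rfl (Fin.cast h.symm a) :=
  (Finset.orderEmbOfFin_eq_orderEmbOfFin_iff (h := h) (h' := rfl)).mpr rfl

lemma det_apply'' {m : ℕ} (M : Matrix (Fin m) (Fin m) ℂ) :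
    M.det = ∑ σ : Equiv.Perm (Fin m), ((Equiv.Perm.sign σ : ℤ) : ℂ) * ∏ i, M (σ i) i := by
  rw [Matrix.det_apply]
  exact Finset.sum_congr rfl fun σ _ => by rw [Units.smul_def, zsmul_eq_mul]

theorem laplace (Y : Matrix (Fin n) (Fin n) ℂ) (K : Finset (Fin n)) :
    Y.det = ∑ P ∈ Finset.univ.powersetCard K.card,
      ((-1 : ℂ) ^ (wt0 K + wt0 P)) * minorC Y K P * minorC Y Kᶜ Pᶜ := by
  classical
  rw [det_apply'']
  rw [← Finset.sum_fiberwise_of_maps_to (g := fun σ : Equiv.Perm (Fin n) => K.image σ.symm)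
    (fun σ _ => by
      rw [Finset.mem_powersetCard_univ]
      exact Finset.card_image_of_injective K σ.symm.injective)]
  refine Finset.sum_congr rfl fun P hP => ?_
  have hPK : P.card = K.card := (Finset.mem_powersetCard_univ).mp hP
  have hc : Pᶜ.card = Kᶜ.card := by rw [Finset.card_compl, Finset.card_compl, hPK]
  rw [minorC, dif_pos hPK, minorC, dif_pos hc, det_apply'', det_apply'', mul_assoc,
    Finset.sum_mul_sum, ← Finset.sum_product', Finset.univ_product_univ, Finset.mul_sum]
  set C : Fin P.card ⊕ Fin Pᶜ.card ≃ Fin K.card ⊕ Fin Kᶜ.card :=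
    Equiv.sumCongr (finCongr hPK) (finCongr hc) with hC
  set Φ : Equiv.Perm (Fin K.card) × Equiv.Perm (Fin Kᶜ.card) → Equiv.Perm (Fin n) :=
    fun τ => (sumEquiv P).symm.trans (C.trans ((Equiv.sumCongr τ.1 τ.2).trans (sumEquiv K)))
    with hΦ
  have hΦ_apply : ∀ τ x, Φ τ x = sumEquiv K (Equiv.sumCongr τ.1 τ.2 (C ((sumEquiv P).symm x))) :=
    fun τ x => rfl
  have hΦsymm_apply : ∀ τ x, (Φ τ).symm x
      = sumEquiv P (C.symm ((Equiv.sumCongr τ.1 τ.2).symm ((sumEquiv K).symm x))) :=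
    fun τ x => rfl
  -- sign computation
  have hKP : Equiv.Perm.sign (permOf K) * Equiv.Perm.sign (permOf P)
      = (-1) ^ (wt0 K + wt0 P) := by
    rw [sign_permOf, sign_permOf, ← pow_add]
    have he : (wt0 K + ∑ i ∈ Finset.range K.card, i) + (wt0 P + ∑ i ∈ Finset.range P.card, i)
        = (wt0 K + wt0 P) + 2 * ∑ i ∈ Finset.range K.card, i := by rw [hPK]; ring
    rw [he, pow_add, pow_mul, Int.units_sq, one_pow, mul_one]
  have hsign : ∀ τ : Equiv.Perm (Fin K.card) × Equiv.Perm (Fin Kᶜ.card),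
      Equiv.Perm.sign (Φ τ) = (-1) ^ (wt0 K + wt0 P)
        * (Equiv.Perm.sign τ.1 * Equiv.Perm.sign τ.2) := by
    intro τ
    have hfact : Φ τ = (permOf K) * ((canEquiv K).permCongr (Equiv.sumCongr τ.1 τ.2))
        * (permOf P)⁻¹ := by
      refine Equiv.ext fun x => ?_
      rw [hΦ_apply]
      simp only [Equiv.Perm.mul_apply, permOf, Equiv.Perm.inv_def, Equiv.symm_trans_apply,
        Equiv.symm_symm, Equiv.trans_apply, Equiv.permCongr_apply]
      rw [can_rel hPK hc ((sumEquiv P).symm x), Equiv.symm_apply_apply, Equiv.symm_apply_apply]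
    rw [hfact, Equiv.Perm.sign_mul, Equiv.Perm.sign_mul, Equiv.Perm.sign_inv,
      Equiv.Perm.sign_permCongr, Equiv.Perm.sign_sumCongr, ← hKP]
    exact mul_right_comm _ _ _
  refine (Finset.sum_bij (fun τ (_ : τ ∈ Finset.univ) => Φ τ) ?_ ?_ ?_ ?_).symm
  · -- membership
    intro τ _
    simp only [Finset.mem_filter, Finset.mem_univ, true_and]
    apply Finset.eq_of_subset_of_card_le
    · rw [Finset.image_subset_iff]
      intro x hx
      obtain ⟨i, hi⟩ := sumEquiv_symm_inl K hx
      rw [hΦsymm_apply, hi]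
      simp only [hC, Equiv.sumCongr_symm, Equiv.sumCongr_apply, Sum.map_inl]
      exact P.orderEmbOfFin_mem rfl _
    · rw [Finset.card_image_of_injective K (Φ _).symm.injective, hPK]
  · -- injectivity
    intro τ _ τ' _ hττ'
    have key : ∀ y, Equiv.sumCongr τ.1 τ.2 y = Equiv.sumCongr τ'.1 τ'.2 y := by
      intro y
      have h1 := congrArg (fun e : Equiv.Perm (Fin n) =>
        (sumEquiv K).symm (e (sumEquiv P (C.symm y)))) hττ'
      simpa only [hΦ_apply, Equiv.symm_apply_apply, Equiv.apply_symm_apply] using h1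
    have h1 : τ.1 = τ'.1 := by
      refine Equiv.ext fun a => ?_
      have := key (Sum.inl a)
      simpa using this
    have h2 : τ.2 = τ'.2 := by
      refine Equiv.ext fun b => ?_
      have := key (Sum.inr b)
      simpa using this
    exact Prod.ext h1 h2
  · -- surjectivity
    intro σ hσ
    simp only [Finset.mem_filter, Finset.mem_univ, true_and] at hσ
    have hmapsP : ∀ x ∈ P, σ x ∈ K := by
      intro x hx
      rw [← hσ] at hx
      obtain ⟨y, hy, hyx⟩ := Finset.mem_image.mp hx
      rw [← hyx, Equiv.apply_symm_apply]
      exact hy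
    set ρ : Equiv.Perm (Fin K.card ⊕ Fin Kᶜ.card) :=
      C.symm.trans ((sumEquiv P).trans (σ.trans (sumEquiv K).symm)) with hρ
    have hmaps : Set.MapsTo ρ (Set.range Sum.inl) (Set.range Sum.inl) := by
      rintro _ ⟨a, rfl⟩
      have hmem : σ (sumEquiv P (C.symm (Sum.inl a))) ∈ K := by
        apply hmapsP
        simp only [hC, Equiv.sumCongr_symm, Equiv.sumCongr_apply, Sum.map_inl]
        exact P.orderEmbOfFin_mem rfl _
      obtain ⟨i, hi⟩ := sumEquiv_symm_inl K hmem
      exact ⟨i, by rw [hρ]; simp only [Equiv.trans_apply]; rw [hi]⟩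
    obtain ⟨⟨τ₁, τ₂⟩, hτ⟩ := Equiv.Perm.mem_sumCongrHom_range_of_perm_mapsTo_inl hmaps
    refine ⟨(τ₁, τ₂), Finset.mem_univ _, ?_⟩
    have hτ' : Equiv.sumCongr τ₁ τ₂ = ρ := hτ
    refine Equiv.ext fun x => ?_
    rw [hΦ_apply]
    simp only [hτ', hρ, Equiv.trans_apply, Equiv.apply_symm_apply, Equiv.symm_apply_apply]
  · -- values
    intro τ _
    rw [hsign τ]
    have hprod : ∏ i, Y (Φ τ i) i
        = (∏ a, Y (K.orderEmbOfFin rfl (τ.1 a)) (P.orderEmbOfFin hPK a))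
          * ∏ b, Y (Kᶜ.orderEmbOfFin rfl (τ.2 b)) (Pᶜ.orderEmbOfFin hc b) := by
      rw [← Equiv.prod_comp (sumEquiv P) (fun x => Y (Φ τ x) x), Fintype.prod_sum_type]
      congr 1
      · rw [← Equiv.prod_comp (finCongr hPK).symm
          (fun i => Y (Φ τ (sumEquiv P (Sum.inl i))) (sumEquiv P (Sum.inl i)))]
        refine Finset.prod_congr rfl fun a _ => ?_
        rw [hΦ_apply, emb_cast P hPK a]
        simp [hC, finCongr_symm, finCongr_apply, Fin.cast_cast, Fin.cast_eq_self]
      · rw [← Equiv.prod_comp (finCongr hc).symm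
          (fun j => Y (Φ τ (sumEquiv P (Sum.inr j))) (sumEquiv P (Sum.inr j)))]
        refine Finset.prod_congr rfl fun b _ => ?_
        rw [hΦ_apply, emb_cast Pᶜ hc b]
        simp [hC, finCongr_symm, finCongr_apply, Fin.cast_cast, Fin.cast_eq_self]
    rw [hprod]
    simp only [Matrix.of_apply, Units.val_mul, Units.val_pow_eq_pow_val, Units.val_neg,
      Units.val_one, Int.cast_mul, Int.cast_pow, Int.cast_neg, Int.cast_one]
    ring

theorem laplace_delta (Y : Matrix (Fin n) (Fin n) ℂ) (K K' : Finset (Fin n))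
    (hK' : K'.card = K.card) :
    (if K = K' then (1 : ℂ) else 0) * Y.det =
      ∑ P ∈ Finset.univ.powersetCard K.card,
        ((-1 : ℂ)) ^ (wt0 K + wt0 P) * minorC Y K P * minorC Y K'ᶜ Pᶜ := by
  classical
  by_cases hKK : K = K'
  · subst hKK
    rw [if_pos rfl, one_mul]
    exact laplace Y K
  · rw [if_neg hKK, zero_mul]
    -- the replaced-rows matrix
    set ρ : Fin n → Fin n := fun i =>
      if h : i ∈ K' then K.orderEmbOfFin rfl ((K'.orderIsoOfFin hK').symm ⟨i, h⟩) else i with hρ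
    set Z : Matrix (Fin n) (Fin n) ℂ := Y.submatrix ρ id with hZ
    have hρK' : ∀ a : Fin K'.card,
        ρ (K'.orderEmbOfFin rfl a) = K.orderEmbOfFin rfl (Fin.cast hK' a) := by
      intro a
      rw [hρ]
      simp only [dif_pos (K'.orderEmbOfFin_mem rfl a)]
      congr 1
      rw [OrderIso.symm_apply_eq]
      apply Subtype.ext
      rw [Finset.coe_orderIsoOfFin_apply]
      exact ((Finset.orderEmbOfFin_eq_orderEmbOfFin_iff (h := rfl) (h' := hK')).mpr rfl)
    have hρother : ∀ x : Fin n, x ∉ K' → ρ x = x := fun x hx => dif_neg hx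
    -- minor transfer
    have hm1 : ∀ P : Finset (Fin n), P.card = K.card → minorC Z K' P = minorC Y K P := by
      intro P hPK
      have hPK' : P.card = K'.card := hPK.trans hK'.symm
      rw [minorC, dif_pos hPK', minorC, dif_pos hPK]
      rw [← Matrix.det_submatrix_equiv_self (finCongr hK')
        (Matrix.of fun a b : Fin K.card => Y (K.orderEmbOfFin rfl a) (P.orderEmbOfFin hPK b))]
      congr 1
      ext a b
      simp only [Matrix.submatrix_apply, Matrix.of_apply, hZ, id_eq]
      rw [hρK' a,
        show P.orderEmbOfFin hPK' b = P.orderEmbOfFin hPK (finCongr hK' b) from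
          (Finset.orderEmbOfFin_eq_orderEmbOfFin_iff (h := hPK') (h' := hPK)).mpr rfl,
        finCongr_apply]
      exact rfl
    have hm2 : ∀ P : Finset (Fin n), minorC Z K'ᶜ Pᶜ = minorC Y K'ᶜ Pᶜ := by
      intro P
      rw [minorC, minorC]
      by_cases hcc : Pᶜ.card = K'ᶜ.card
      · rw [dif_pos hcc, dif_pos hcc]
        congr 1
        ext a b
        simp only [Matrix.submatrix_apply, Matrix.of_apply, hZ, id_eq]
        rw [hρother _ (Finset.mem_compl.mp (K'ᶜ.orderEmbOfFin_mem rfl a))]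
      · rw [dif_neg hcc, dif_neg hcc]
    -- repeated row
    obtain ⟨a, haK, haK'⟩ : ∃ a ∈ K, a ∉ K' := by
      by_contra h
      push_neg at h
      exact hKK (Finset.eq_of_subset_of_card_le h (le_of_eq hK'))
    have hdetZ : Z.det = 0 := by
      obtain ⟨t, ht⟩ := (mem_emb K rfl a).mp haK
      set b : Fin n := K'.orderEmbOfFin hK' t with hb
      have hbK' : b ∈ K' := K'.orderEmbOfFin_mem hK' t
      have hab : a ≠ b := fun h => haK' (h ▸ hbK')
      apply Matrix.det_zero_of_row_eq hab
      funext c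
      simp only [hZ, Matrix.submatrix_apply, id_eq]
      congr 1
      rw [hρother a haK', hρ]
      simp only [dif_pos hbK']
      have : (K'.orderIsoOfFin hK').symm ⟨b, hbK'⟩ = t := by
        rw [OrderIso.symm_apply_eq]
        exact Subtype.ext (Finset.coe_orderIsoOfFin_apply K' hK' t)
      rw [this, ht]
    -- assemble
    have key : ∀ P ∈ Finset.univ.powersetCard K.card,
        ((-1 : ℂ)) ^ (wt0 K + wt0 P) * minorC Y K P * minorC Y K'ᶜ Pᶜ
          = ((-1 : ℂ)) ^ (wt0 K + wt0 K')
            * (((-1 : ℂ)) ^ (wt0 K' + wt0 P) * minorC Z K' P * minorC Z K'ᶜ Pᶜ) := by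
      intro P hP
      have hPK : P.card = K.card := (Finset.mem_powersetCard_univ).mp hP
      rw [hm1 P hPK, hm2 P]
      have hsgn : ((-1 : ℂ)) ^ (wt0 K + wt0 K') * ((-1 : ℂ)) ^ (wt0 K' + wt0 P)
          = ((-1 : ℂ)) ^ (wt0 K + wt0 P) := by
        rw [← pow_add, show wt0 K + wt0 K' + (wt0 K' + wt0 P)
          = (wt0 K + wt0 P) + 2 * wt0 K' by ring, pow_add, pow_mul]
        norm_num
      rw [← hsgn]
      ring
    rw [Finset.sum_congr rfl key, ← Finset.mul_sum]
    have : ∑ P ∈ Finset.univ.powersetCard K.card,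
        ((-1 : ℂ)) ^ (wt0 K' + wt0 P) * minorC Z K' P * minorC Z K'ᶜ Pᶜ = Z.det := by
      rw [laplace Z K', hK']
    rw [this, hdetZ, mul_zero]

variable {N k : ℕ}

lemma subIdx_card (I : Finset (Fin N)) (hI : I.card = k) (A : Finset (Fin k)) :
    (subIdx I hI A).card = A.card :=
  Finset.card_image_of_injective _ (I.orderEmbOfFin hI).injective

lemma subIdx_emb (I : Finset (Fin N)) (hI : I.card = k) (A : Finset (Fin k))
    (x : Fin (subIdx I hI A).card) :
    (subIdx I hI A).orderEmbOfFin rfl x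
      = I.orderEmbOfFin hI (A.orderEmbOfFin (subIdx_card I hI A).symm x) := by
  have hmem : ∀ x : Fin (subIdx I hI A).card,
      I.orderEmbOfFin hI (A.orderEmbOfFin (subIdx_card I hI A).symm x) ∈ subIdx I hI A :=
    fun x => Finset.mem_image_of_mem _ (A.orderEmbOfFin_mem _ x)
  have hmono : StrictMono (fun x : Fin (subIdx I hI A).card =>
      I.orderEmbOfFin hI (A.orderEmbOfFin (subIdx_card I hI A).symm x)) :=
    fun x y h => (I.orderEmbOfFin hI).strictMono ((A.orderEmbOfFin _).strictMono h)
  exact (congrFun (Finset.orderEmbOfFin_unique rfl hmem hmono) x).symm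

lemma subIdx_minor (X : Matrix (Fin N) (Fin N) ℂ) (I J : Finset (Fin N))
    (hI : I.card = k) (hJ : J.card = k) (A B : Finset (Fin k)) :
    minorC X (subIdx I hI A) (subIdx J hJ B)
      = minorC (Matrix.of fun a b : Fin k =>
          X (I.orderEmbOfFin hI a) (J.orderEmbOfFin hJ b)) A B := by
  by_cases hBA : B.card = A.card
  · have h1 : (subIdx J hJ B).card = (subIdx I hI A).card := by
      rw [subIdx_card, subIdx_card, hBA]
    rw [minorC, dif_pos h1, minorC, dif_pos hBA]
    rw [← Matrix.det_submatrix_equiv_self (finCongr (subIdx_card I hI A))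
      (Matrix.of fun a b : Fin A.card =>
        (Matrix.of fun a b : Fin k => X (I.orderEmbOfFin hI a) (J.orderEmbOfFin hJ b))
          (A.orderEmbOfFin rfl a) (B.orderEmbOfFin hBA b))]
    congr 1
    ext a b
    simp only [Matrix.submatrix_apply, Matrix.of_apply]
    rw [emb_cast (subIdx J hJ B) h1, subIdx_emb, subIdx_emb]
    refine congrArg₂ X (congrArg _ ?_) (congrArg _ ?_)
    · exact (Finset.orderEmbOfFin_eq_orderEmbOfFin_iff
        (h := (subIdx_card I hI A).symm) (h' := rfl)).mpr rfl
    · exact (Finset.orderEmbOfFin_eq_orderEmbOfFin_iff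
        (h := (subIdx_card J hJ B).symm) (h' := hBA)).mpr rfl
  · have h1 : (subIdx J hJ B).card ≠ (subIdx I hI A).card := by
      rw [subIdx_card, subIdx_card]; exact hBA
    rw [minorC, dif_neg h1, minorC, dif_neg hBA]

lemma subIdx_compl (I : Finset (Fin N)) (hI : I.card = k) (A : Finset (Fin k)) :
    I \ subIdx I hI A = subIdx I hI Aᶜ := by
  ext x
  simp only [Finset.mem_sdiff, subIdx, Finset.mem_image]
  constructor
  · rintro ⟨hxI, hnx⟩
    obtain ⟨p, hp⟩ := (mem_emb I hI x).mp hxI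
    refine ⟨p, ?_, hp⟩
    rw [Finset.mem_compl]
    intro hpA
    exact hnx ⟨p, hpA, hp⟩
  · rintro ⟨p, hpc, hp⟩
    refine ⟨hp ▸ I.orderEmbOfFin_mem hI p, ?_⟩
    rintro ⟨q, hq, hqx⟩
    have hqp : q = p := (I.orderEmbOfFin hI).injective (hqx.trans hp.symm)
    exact (Finset.mem_compl.mp hpc) (hqp ▸ hq)

lemma minor_full (X : Matrix (Fin N) (Fin N) ℂ) (I J : Finset (Fin N))
    (hI : I.card = k) (hJ : J.card = k) :
    minorC X I J = (Matrix.of fun a b : Fin k =>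
      X (I.orderEmbOfFin hI a) (J.orderEmbOfFin hJ b)).det := by
  have h : J.card = I.card := hJ.trans hI.symm
  rw [minorC, dif_pos h, ← Matrix.det_submatrix_equiv_self (finCongr hI)
    (Matrix.of fun a b : Fin k => X (I.orderEmbOfFin hI a) (J.orderEmbOfFin hJ b))]
  congr 1

lemma wtF_eq (A : Finset (Fin k)) : wtF A = wt0 A + A.card := by
  rw [wtF, wt0, Finset.sum_add_distrib, Finset.sum_const, smul_eq_mul, mul_one]

lemma neg_one_zpow_sub (a b : ℕ) :
    ((-1 : ℂ)) ^ ((a : ℤ) - (b : ℤ)) = ((-1 : ℂ)) ^ (a + b) := by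
  rw [show ((a : ℤ) - b) = ((a : ℤ) + b) - 2 * b by ring,
    zpow_sub₀ (by norm_num : (-1 : ℂ) ≠ 0),
    show ((a : ℤ) + b) = ((a + b : ℕ) : ℤ) by push_cast; ring,
    show (2 * (b : ℤ)) = ((2 * b : ℕ) : ℤ) by push_cast; ring,
    zpow_natCast, zpow_natCast, pow_mul]
  norm_num

end GenLaplace

open GenLaplace in
theorem stmt14 (N k l : ℕ) (I : Finset (Fin N)) (hI : I.card = k)
    (K K' : Finset (Fin k)) (hK : K.card = l) (hK' : K'.card = l)
    (X : Matrix (Fin N) (Fin N) ℂ) (J : Finset (Fin N)) (hJ : J.card = k) :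
    (if K = K' then (1 : ℂ) else 0) * minorC X I J =
      ∑ P ∈ Finset.univ.powersetCard l,
        ((-1 : ℂ) ^ ((wtF P : ℤ) - (wtF K : ℤ))) *
          minorC X (subIdx I hI K) (subIdx J hJ P) *
          minorC X (I \ subIdx I hI K') (J \ subIdx J hJ P) := by
  classical
  subst hK
  rw [minor_full X I J hI hJ, laplace_delta _ K K' hK']
  refine (Finset.sum_congr rfl fun P hP => ?_).symm
  have hPK : P.card = K.card := (Finset.mem_powersetCard_univ).mp hP
  rw [subIdx_compl I hI K', subIdx_compl J hJ P, subIdx_minor X I J hI hJ K P,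
    subIdx_minor X I J hI hJ K'ᶜ Pᶜ]
  have hsgn : ((-1 : ℂ)) ^ ((wtF P : ℤ) - (wtF K : ℤ)) = ((-1 : ℂ)) ^ (wt0 K + wt0 P) := by
    rw [neg_one_zpow_sub, wtF_eq, wtF_eq,
      show (wt0 P + P.card) + (wt0 K + K.card) = (wt0 K + wt0 P) + 2 * K.card by
        rw [hPK]; ring,
      pow_add, pow_mul]
    norm_num
  rw [hsgn]
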